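/- arXiv:1003.4240 — 4 statements merged into one kernel-verified Lean document; each statement's English description precedes it below -/
import Mathlib

section
/- Let F_q be a finite field of odd characteristic, d ≥ 2 with d less than the characteristic, and a₁, a₂ ∈ F_q \ {0}. For t ∈ F_q let V_t = {x ∈ F_q² : a₁x₁^d + a₂x₂^d = t} and define V̂_t(m) = q^{-2} ∑_{x ∈ F_q²} χ(-x·m)·1_{V_t}(x) for a nontrivial additive character χ. Then for every m ∈ F_q² \ {(0,0)}, |∑_{t ∈ F_q} V̂_t(m)·|V_t|| ≤ C with C independent of q. -/
open Finset Polynomial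

section DiagonalCurveAux

variable {F : Type} [Field F] [Fintype F] [DecidableEq F]

/-- The equation `x ^ d = c` has at most `d` solutions in a field. -/
lemma dcfsb_card_pow_eq_le (d : ℕ) (hd : d ≠ 0) (c : F) :
    (Finset.univ.filter (fun x : F => x ^ d = c)).card ≤ d := by
  have hp : (X ^ d - C c : F[X]) ≠ 0 := by
    intro h
    have := congrArg Polynomial.natDegree h
    rw [natDegree_X_pow_sub_C, natDegree_zero] at this
    exact hd this
  calc (Finset.univ.filter (fun x : F => x ^ d = c)).card
      ≤ (X ^ d - C c : F[X]).roots.toFinset.card := by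
        apply Finset.card_le_card
        intro x hx
        simp only [Finset.mem_filter] at hx
        simp [Multiset.mem_toFinset, Polynomial.mem_roots hp, Polynomial.IsRoot, sub_eq_zero, hx.2]
    _ ≤ Multiset.card (X ^ d - C c : F[X]).roots := Multiset.toFinset_card_le _
    _ ≤ (X ^ d - C c : F[X]).natDegree := Polynomial.card_roots' _
    _ = d := natDegree_X_pow_sub_C

omit [DecidableEq F] in
lemma dcfsb_conj_char (χ : AddChar F ℂ) (z : F) : (starRingEnd ℂ) (χ z) = χ (-z) := by
  rw [AddChar.map_neg_eq_inv, ← Complex.inv_eq_conj (by simp)]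

/-- Second moment bound for Weil-type sums: `∑ₛ ‖∑ₓ χ(s·a·x^d + b·x)‖² ≤ d·q²`. -/
lemma dcfsb_second_moment (χ : AddChar F ℂ) (d : ℕ) (hd : d ≠ 0) (hχ : χ.IsPrimitive) {a : F}
    (ha : a ≠ 0) (b : F) :
    ∑ s : F, ‖∑ x : F, χ (s * a * x ^ d + b * x)‖ ^ 2
      ≤ d * (Fintype.card F : ℝ) ^ 2 := by
  set q := Fintype.card F with hq
  set W : F → ℂ := fun s => ∑ x : F, χ (s * a * x ^ d + b * x) with hW
  have key : ∑ s : F, (W s * (starRingEnd ℂ) (W s))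
      = ∑ y : F, ∑ x : F, (if x ^ d = y ^ d then (q : ℂ) * χ (b * (x - y)) else 0) := by
    have expand : ∀ s : F, W s * (starRingEnd ℂ) (W s)
        = ∑ y : F, ∑ x : F, χ (s * (a * (x ^ d - y ^ d)) + b * (x - y)) := by
      intro s
      rw [hW]
      simp only [map_sum, dcfsb_conj_char]
      rw [Finset.sum_mul_sum, Finset.sum_comm]
      refine Finset.sum_congr rfl fun y _ => Finset.sum_congr rfl fun x _ => ?_
      rw [← AddChar.map_add_eq_mul]
      ring_nf
    calc ∑ s : F, (W s * (starRingEnd ℂ) (W s))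
        = ∑ s : F, ∑ y : F, ∑ x : F, χ (s * (a * (x ^ d - y ^ d)) + b * (x - y)) :=
          Finset.sum_congr rfl fun s _ => expand s
      _ = ∑ y : F, ∑ x : F, ∑ s : F, χ (s * (a * (x ^ d - y ^ d)) + b * (x - y)) := by
          rw [Finset.sum_comm]
          exact Finset.sum_congr rfl fun y _ => Finset.sum_comm
      _ = ∑ y : F, ∑ x : F, (if x ^ d = y ^ d then (q : ℂ) * χ (b * (x - y)) else 0) := by
          refine Finset.sum_congr rfl fun y _ => Finset.sum_congr rfl fun x _ => ?_
          have h1 : ∀ s : F, χ (s * (a * (x ^ d - y ^ d)) + b * (x - y))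
              = χ (s * (a * (x ^ d - y ^ d))) * χ (b * (x - y)) := fun s =>
            AddChar.map_add_eq_mul χ _ _
          simp_rw [h1, ← Finset.sum_mul, AddChar.sum_mulShift _ hχ]
          rcases eq_or_ne (x ^ d) (y ^ d) with h | h
          · have : a * (x ^ d - y ^ d) = 0 := by rw [h]; ring
            simp [this, h, hq]
          · have : a * (x ^ d - y ^ d) ≠ 0 := by
              simp [ha, sub_eq_zero, h]
            simp [this, h]
  have cast_eq : ((∑ s : F, ‖W s‖ ^ 2 : ℝ) : ℂ) = ∑ s : F, (W s * (starRingEnd ℂ) (W s)) := by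
    push_cast
    refine Finset.sum_congr rfl fun s _ => ?_
    rw [Complex.mul_conj, Complex.normSq_eq_norm_sq]; push_cast; ring
  have hnonneg : (0:ℝ) ≤ ∑ s : F, ‖W s‖ ^ 2 := Finset.sum_nonneg fun _ _ => sq_nonneg _
  have : ∑ s : F, ‖W s‖ ^ 2
      = ‖∑ y : F, ∑ x : F, (if x ^ d = y ^ d then (q : ℂ) * χ (b * (x - y)) else 0)‖ := by
    rw [← key, ← cast_eq, Complex.norm_real, Real.norm_of_nonneg hnonneg]
  rw [this]
  calc ‖∑ y : F, ∑ x : F, (if x ^ d = y ^ d then (q : ℂ) * χ (b * (x - y)) else 0)‖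
      ≤ ∑ y : F, ‖∑ x : F, (if x ^ d = y ^ d then (q : ℂ) * χ (b * (x - y)) else 0)‖ :=
        norm_sum_le _ _
    _ ≤ ∑ y : F, (d * q : ℝ) := by
        refine Finset.sum_le_sum fun y _ => ?_
        calc ‖∑ x : F, (if x ^ d = y ^ d then (q : ℂ) * χ (b * (x - y)) else 0)‖
            ≤ ∑ x : F, ‖(if x ^ d = y ^ d then (q : ℂ) * χ (b * (x - y)) else 0)‖ :=
              norm_sum_le _ _
          _ = ∑ x : F, (if x ^ d = y ^ d then (q : ℝ) else 0) := by
              refine Finset.sum_congr rfl fun x _ => ?_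
              rcases eq_or_ne (x ^ d) (y ^ d) with h | h <;>
                simp [h, norm_mul]
          _ = ((Finset.univ.filter (fun x : F => x ^ d = y ^ d)).card : ℝ) * q := by
              rw [← Finset.sum_filter, Finset.sum_const, nsmul_eq_mul]
          _ ≤ (d : ℝ) * q := by
              have := dcfsb_card_pow_eq_le (F := F) d hd (y ^ d)
              exact mul_le_mul_of_nonneg_right (by exact_mod_cast this) (by positivity)
    _ = (q : ℝ) * ((d : ℝ) * q) := by rw [Finset.sum_const, Finset.card_univ, nsmul_eq_mul]
    _ = d * (q : ℝ) ^ 2 := by ring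

/-- Pointwise bound `‖∑ₓ χ(c·x^d)‖² ≤ 2d²q` for `c ≠ 0`, via dilation invariance. -/
lemma dcfsb_pointwise_bound (χ : AddChar F ℂ) (d : ℕ) (hd : d ≠ 0) (hχ : χ.IsPrimitive) {c : F}
    (hc : c ≠ 0) :
    ‖∑ x : F, χ (c * x ^ d)‖ ^ 2 ≤ 2 * d ^ 2 * (Fintype.card F : ℝ) := by
  set q := Fintype.card F with hq
  set G : F → ℝ := fun u => ‖∑ x : F, χ (u * x ^ d)‖ ^ 2 with hG
  have inv : ∀ l : F, l ≠ 0 → G (c * l ^ d) = G c := by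
    intro l hl
    have : ∑ x : F, χ (c * l ^ d * x ^ d) = ∑ x : F, χ (c * x ^ d) :=
      Fintype.sum_bijective (fun x => l * x) (mulLeft_bijective₀ l hl)
        _ _ (fun x => by rw [mul_pow]; ring_nf)
    simp only [hG, this]
  set Orb : Finset F := (Finset.univ.filter (fun l : F => l ≠ 0)).image (fun l => c * l ^ d)
    with hOrb
  have horbcard : (q - 1 : ℕ) ≤ d * Orb.card := by
    have h1 : (Finset.univ.filter (fun l : F => l ≠ 0)).card = q - 1 := by
      rw [Finset.filter_ne' Finset.univ 0, Finset.card_erase_of_mem (Finset.mem_univ 0),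
        Finset.card_univ]
    rw [← h1]
    apply Finset.card_le_mul_card_image
    intro u _
    calc ((Finset.univ.filter (fun l : F => l ≠ 0)).filter (fun l => c * l ^ d = u)).card
        ≤ (Finset.univ.filter (fun l : F => l ^ d = c⁻¹ * u)).card := by
          apply Finset.card_le_card
          intro l hl
          simp only [Finset.mem_filter, Finset.mem_univ, true_and] at hl ⊢
          rw [← hl.2]; field_simp
      _ ≤ d := dcfsb_card_pow_eq_le d hd _
  have hsum : (Orb.card : ℝ) * G c ≤ d * (q : ℝ) ^ 2 := by
    have h2 : ∑ u ∈ Orb, G u = Orb.card * G c := by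
      rw [Finset.sum_congr rfl (fun u hu => ?_), Finset.sum_const, nsmul_eq_mul]
      obtain ⟨l, hl, rfl⟩ := Finset.mem_image.mp hu
      exact inv l (by simpa using hl)
    have h3 : ∑ u ∈ Orb, G u ≤ ∑ u : F, G u :=
      Finset.sum_le_sum_of_subset_of_nonneg (Finset.subset_univ _)
        (fun u _ _ => sq_nonneg _)
    have h4 : ∑ u : F, G u ≤ d * (q : ℝ) ^ 2 := by
      have := dcfsb_second_moment χ d hd hχ (a := 1) one_ne_zero 0
      simp only [mul_one, zero_mul, add_zero] at this
      simpa [hG] using this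
    linarith [h2 ▸ h3]
  have hq2 : (2 : ℝ) ≤ q := by exact_mod_cast Fintype.one_lt_card
  have hGnn : 0 ≤ G c := sq_nonneg _
  have horb' : (q : ℝ) - 1 ≤ d * Orb.card := by
    have h1 : 1 ≤ q := Fintype.card_pos
    have h2 : ((q - 1 : ℕ) : ℝ) ≤ ((d * Orb.card : ℕ) : ℝ) := Nat.cast_le.mpr horbcard
    rw [Nat.cast_sub h1] at h2
    push_cast at h2 ⊢
    linarith
  have hd1 : (1:ℝ) ≤ d := by exact_mod_cast Nat.one_le_iff_ne_zero.mpr hd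
  have hdnn : (0:ℝ) ≤ d := by linarith
  have h5 : ((q:ℝ) - 1) * G c ≤ (d:ℝ)^2 * (q:ℝ)^2 := by
    nlinarith [mul_le_mul_of_nonneg_right horb' hGnn,
      mul_le_mul_of_nonneg_left hsum hdnn, (by positivity : (0:ℝ) ≤ (Orb.card : ℝ))]
  have h7 : (d:ℝ)^2 * (q:ℝ)^2 ≤ 2 * (d:ℝ)^2 * (q:ℝ) * ((q:ℝ) - 1) := by
    nlinarith [mul_le_mul_of_nonneg_left (show (q:ℝ) ≤ 2*((q:ℝ)-1) by linarith)
      (by positivity : (0:ℝ) ≤ (d:ℝ)^2 * (q:ℝ))]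
  have h9 : (0:ℝ) < (q:ℝ) - 1 := by linarith
  have : G c ≤ 2 * (d:ℝ)^2 * (q:ℝ) := by nlinarith [le_trans h5 h7, h9]
  exact this

/-- The key orthogonality identity, expressing `∑_t (∑_{V_t} χ(-x·m))·|V_t|` in terms of
one-variable Weil sums. -/
lemma dcfsb_main_identity (d : ℕ) (χ : AddChar F ℂ) (hχp : χ.IsPrimitive) (a₁ a₂ : F)
    (m : F × F) :
    ∑ t : F, (∑ x : F × F,
        if a₁ * x.1 ^ d + a₂ * x.2 ^ d = t then χ (-(x.1 * m.1 + x.2 * m.2)) else 0)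
        * (∑ y : F × F, if a₁ * y.1 ^ d + a₂ * y.2 ^ d = t then (1:ℂ) else 0)
      = ((Fintype.card F : ℂ))⁻¹ *
          ∑ s : F,
            ((∑ x : F, χ (s * a₁ * x ^ d + (-m.1) * x)) *
              (∑ x : F, χ (s * a₂ * x ^ d + (-m.2) * x))) *
            ((∑ y : F, χ (-(s * a₁) * y ^ d + 0 * y)) *
              (∑ y : F, χ (-(s * a₂) * y ^ d + 0 * y))) := by
  set q := Fintype.card F with hq
  have hq0 : (q : ℂ) ≠ 0 := Nat.cast_ne_zero.mpr Fintype.card_ne_zero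
  set P : F × F → F := fun x => a₁ * x.1 ^ d + a₂ * x.2 ^ d with hP
  set c : F × F → ℂ := fun x => χ (-(x.1 * m.1 + x.2 * m.2)) with hc
  calc
    ∑ t : F, (∑ x : F × F, if P x = t then c x else 0)
        * (∑ y : F × F, if P y = t then (1:ℂ) else 0)
      = ∑ t : F, ∑ x : F × F, ∑ y : F × F,
          (if P x = t then (if P y = t then c x else 0) else 0) := by
        refine Finset.sum_congr rfl fun t _ => ?_
        rw [Finset.sum_mul_sum]
        refine Finset.sum_congr rfl fun x _ => Finset.sum_congr rfl fun y _ => ?_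
        split_ifs <;> simp
    _ = ∑ x : F × F, ∑ y : F × F, ∑ t : F,
          (if P x = t then (if P y = t then c x else 0) else 0) := by
        rw [Finset.sum_comm]
        exact Finset.sum_congr rfl fun x _ => Finset.sum_comm
    _ = ∑ x : F × F, ∑ y : F × F, (if P y = P x then c x else 0) := by
        refine Finset.sum_congr rfl fun x _ => Finset.sum_congr rfl fun y _ => ?_
        rw [Finset.sum_ite_eq]
        simp
    _ = ∑ x : F × F, ∑ y : F × F, (q : ℂ)⁻¹ * ((∑ s : F, χ (s * (P x - P y))) * c x) := by
        refine Finset.sum_congr rfl fun x _ => Finset.sum_congr rfl fun y _ => ?_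
        rw [AddChar.sum_mulShift _ hχp]
        rcases eq_or_ne (P y) (P x) with h | h
        · rw [if_pos h, if_pos (by rw [h, sub_self])]
          field_simp
          rfl
        · rw [if_neg h, if_neg (by rw [sub_eq_zero]; exact fun hh => h hh.symm)]
          simp
    _ = (q : ℂ)⁻¹ * ∑ x : F × F, ∑ y : F × F, (∑ s : F, χ (s * (P x - P y))) * c x := by
        rw [Finset.mul_sum]
        refine Finset.sum_congr rfl fun x _ => ?_
        rw [Finset.mul_sum]
    _ = (q : ℂ)⁻¹ * ∑ s : F,
          (∑ x : F × F, χ (s * P x) * c x) * (∑ y : F × F, χ (-(s * P y))) := by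
        congr 1
        calc ∑ x : F × F, ∑ y : F × F, (∑ s : F, χ (s * (P x - P y))) * c x
            = ∑ x : F × F, ∑ y : F × F, ∑ s : F, (χ (s * P x) * c x) * χ (-(s * P y)) := by
              refine Finset.sum_congr rfl fun x _ => Finset.sum_congr rfl fun y _ => ?_
              rw [Finset.sum_mul]
              refine Finset.sum_congr rfl fun s _ => ?_
              have h5 : χ (s * (P x - P y)) = χ (s * P x) * χ (-(s * P y)) := by
                rw [← AddChar.map_add_eq_mul]
                congr 1
                ring
              rw [h5]
              ring
          _ = ∑ x : F × F, ∑ s : F, ∑ y : F × F, (χ (s * P x) * c x) * χ (-(s * P y)) :=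
              Finset.sum_congr rfl fun x _ => Finset.sum_comm
          _ = ∑ s : F, ∑ x : F × F, ∑ y : F × F, (χ (s * P x) * c x) * χ (-(s * P y)) :=
              Finset.sum_comm
          _ = ∑ s : F, (∑ x : F × F, χ (s * P x) * c x) * (∑ y : F × F, χ (-(s * P y))) :=
              Finset.sum_congr rfl fun s _ => (Finset.sum_mul_sum _ _ _ _).symm
    _ = ((Fintype.card F : ℂ))⁻¹ * ∑ s : F,
            ((∑ x : F, χ (s * a₁ * x ^ d + (-m.1) * x)) *
              (∑ x : F, χ (s * a₂ * x ^ d + (-m.2) * x))) *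
            ((∑ y : F, χ (-(s * a₁) * y ^ d + 0 * y)) *
              (∑ y : F, χ (-(s * a₂) * y ^ d + 0 * y))) := by
        rw [← hq]
        congr 1
        refine Finset.sum_congr rfl fun s _ => ?_
        congr 1
        · rw [Fintype.sum_prod_type, Finset.sum_mul_sum]
          refine Finset.sum_congr rfl fun x1 _ => Finset.sum_congr rfl fun x2 _ => ?_
          show χ (s * (a₁ * x1 ^ d + a₂ * x2 ^ d)) * χ (-(x1 * m.1 + x2 * m.2))
              = χ (s * a₁ * x1 ^ d + (-m.1) * x1) * χ (s * a₂ * x2 ^ d + (-m.2) * x2)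
          rw [← AddChar.map_add_eq_mul, ← AddChar.map_add_eq_mul]
          congr 1
          ring
        · rw [Fintype.sum_prod_type, Finset.sum_mul_sum]
          refine Finset.sum_congr rfl fun y1 _ => Finset.sum_congr rfl fun y2 _ => ?_
          show χ (-(s * (a₁ * y1 ^ d + a₂ * y2 ^ d)))
              = χ (-(s * a₁) * y1 ^ d + 0 * y1) * χ (-(s * a₂) * y2 ^ d + 0 * y2)
          rw [← AddChar.map_add_eq_mul]
          congr 1
          ring

end DiagonalCurveAux

/-- For `P(x) = a₁x₁^d + a₂x₂^d` with `2 ≤ d` less than the (odd) characteristic and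
`a₁, a₂ ≠ 0`, the sum `∑_t V̂_t(m)·|V_t|` is bounded by a constant independent of `q`,
for every `m ≠ (0,0)`. -/
theorem diagonal_curve_fourier_sum_bound (d : ℕ) (hd : 2 ≤ d) :
    ∃ C : ℝ, ∀ (F : Type) [Field F] [Fintype F] [DecidableEq F],
      Odd (ringChar F) → d < ringChar F →
      ∀ a₁ a₂ : F, a₁ ≠ 0 → a₂ ≠ 0 →
      ∀ χ : AddChar F ℂ, χ ≠ 1 →
      ∀ m : F × F, m ≠ (0, 0) →
        ‖∑ t : F,
            (((Fintype.card F : ℂ) ^ 2)⁻¹ *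
              ∑ x : F × F,
                if a₁ * x.1 ^ d + a₂ * x.2 ^ d = t then χ (-(x.1 * m.1 + x.2 * m.2)) else 0) *
            (Nat.card {x : F × F // a₁ * x.1 ^ d + a₂ * x.2 ^ d = t} : ℂ)‖ ≤ C := by
  refine ⟨2 * (d : ℝ) ^ 3, ?_⟩
  intro F _ _ _ _hodd _hdp a₁ a₂ ha₁ ha₂ χ hχ m hm
  have hχp : χ.IsPrimitive := AddChar.IsPrimitive.of_ne_one hχ
  have hd0 : d ≠ 0 := by omega
  set q := Fintype.card F with hq
  have hqpos : (0:ℝ) < q := by exact_mod_cast Fintype.card_pos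
  -- rewrite the cardinality as a character-free indicator sum
  have hN : ∀ t : F, ((Nat.card {x : F × F // a₁ * x.1 ^ d + a₂ * x.2 ^ d = t} : ℂ))
      = ∑ y : F × F, (if a₁ * y.1 ^ d + a₂ * y.2 ^ d = t then (1:ℂ) else 0) := by
    intro t
    rw [Nat.card_eq_fintype_card, Fintype.card_subtype, Finset.card_filter]
    push_cast
    exact Finset.sum_congr rfl fun y _ => by split_ifs <;> simp
  have step1 : ∑ t : F,
      (((q : ℂ) ^ 2)⁻¹ *
        ∑ x : F × F,
          if a₁ * x.1 ^ d + a₂ * x.2 ^ d = t then χ (-(x.1 * m.1 + x.2 * m.2)) else 0) *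
      (Nat.card {x : F × F // a₁ * x.1 ^ d + a₂ * x.2 ^ d = t} : ℂ)
      = ((q : ℂ) ^ 2)⁻¹ * ∑ t : F, (∑ x : F × F,
          if a₁ * x.1 ^ d + a₂ * x.2 ^ d = t then χ (-(x.1 * m.1 + x.2 * m.2)) else 0)
          * (∑ y : F × F, if a₁ * y.1 ^ d + a₂ * y.2 ^ d = t then (1:ℂ) else 0) := by
    rw [Finset.mul_sum]
    exact Finset.sum_congr rfl fun t _ => by rw [hN t]; ring
  rw [step1, dcfsb_main_identity d χ hχp a₁ a₂ m]
  -- norm bound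
  set SS : ℂ := ∑ s : F,
      ((∑ x : F, χ (s * a₁ * x ^ d + (-m.1) * x)) *
        (∑ x : F, χ (s * a₂ * x ^ d + (-m.2) * x))) *
      ((∑ y : F, χ (-(s * a₁) * y ^ d + 0 * y)) *
        (∑ y : F, χ (-(s * a₂) * y ^ d + 0 * y))) with hSS
  have hm' : m.1 ≠ 0 ∨ m.2 ≠ 0 := by
    by_contra h
    push_neg at h
    exact hm (Prod.ext h.1 h.2)
  -- per-term bound
  have per : ∀ s : F,
      ‖((∑ x : F, χ (s * a₁ * x ^ d + (-m.1) * x)) *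
        (∑ x : F, χ (s * a₂ * x ^ d + (-m.2) * x))) *
      ((∑ y : F, χ (-(s * a₁) * y ^ d + 0 * y)) *
        (∑ y : F, χ (-(s * a₂) * y ^ d + 0 * y)))‖
      ≤ (‖∑ x : F, χ (s * a₁ * x ^ d + (-m.1) * x)‖ *
          ‖∑ x : F, χ (s * a₂ * x ^ d + (-m.2) * x)‖) * (2 * (d:ℝ)^2 * q) := by
    intro s
    rcases eq_or_ne s 0 with rfl | hs
    · -- the `s = 0` term vanishes since `m ≠ 0`
      have hcompute : ∀ (a b : F), b ≠ 0 → (∑ x : F, χ ((0:F) * a * x ^ d + (-b) * x)) = 0 := by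
        intro a b hb
        have : ∀ x : F, χ ((0:F) * a * x ^ d + (-b) * x) = χ (x * (-b)) := by
          intro x; congr 1; ring
        simp_rw [this, AddChar.sum_mulShift _ hχp]
        rw [if_neg (neg_ne_zero.mpr hb)]
        norm_num
      rcases hm' with h1 | h2
      · rw [hcompute a₁ m.1 h1]
        simp only [zero_mul, norm_zero]
        positivity
      · rw [hcompute a₂ m.2 h2]
        simp only [mul_zero, zero_mul, norm_zero]
        positivity
    · rw [norm_mul, norm_mul, norm_mul]
      have hnn : (0:ℝ) ≤ ‖∑ x : F, χ (s * a₁ * x ^ d + (-m.1) * x)‖ *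
          ‖∑ x : F, χ (s * a₂ * x ^ d + (-m.2) * x)‖ := by positivity
      refine mul_le_mul_of_nonneg_left ?_ hnn
      have p1 : ‖∑ y : F, χ (-(s * a₁) * y ^ d + 0 * y)‖ ^ 2 ≤ 2 * (d:ℝ)^2 * q := by
        simp_rw [zero_mul, add_zero]
        exact dcfsb_pointwise_bound χ d hd0 hχp (neg_ne_zero.mpr (mul_ne_zero hs ha₁))
      have p2 : ‖∑ y : F, χ (-(s * a₂) * y ^ d + 0 * y)‖ ^ 2 ≤ 2 * (d:ℝ)^2 * q := by
        simp_rw [zero_mul, add_zero]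
        exact dcfsb_pointwise_bound χ d hd0 hχp (neg_ne_zero.mpr (mul_ne_zero hs ha₂))
      have n1 : (0:ℝ) ≤ ‖∑ y : F, χ (-(s * a₁) * y ^ d + 0 * y)‖ := norm_nonneg _
      have n2 : (0:ℝ) ≤ ‖∑ y : F, χ (-(s * a₂) * y ^ d + 0 * y)‖ := norm_nonneg _
      nlinarith [p1, p2, n1, n2, sq_nonneg (‖∑ y : F, χ (-(s * a₁) * y ^ d + 0 * y)‖ -
        ‖∑ y : F, χ (-(s * a₂) * y ^ d + 0 * y)‖)]
  -- sum the per-term bounds and apply Cauchy–Schwarz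
  have keySS : ‖SS‖ ≤ 2 * (d:ℝ)^3 * (q:ℝ)^3 := by
    have cs : (∑ s : F, ‖∑ x : F, χ (s * a₁ * x ^ d + (-m.1) * x)‖ *
          ‖∑ x : F, χ (s * a₂ * x ^ d + (-m.2) * x)‖) ^ 2
        ≤ (∑ s : F, ‖∑ x : F, χ (s * a₁ * x ^ d + (-m.1) * x)‖ ^ 2) *
          (∑ s : F, ‖∑ x : F, χ (s * a₂ * x ^ d + (-m.2) * x)‖ ^ 2) :=
      Finset.sum_mul_sq_le_sq_mul_sq _ _ _
    have m1 := dcfsb_second_moment χ d hd0 hχp ha₁ (-m.1)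
    have m2 := dcfsb_second_moment χ d hd0 hχp ha₂ (-m.2)
    have hABnn : (0:ℝ) ≤ ∑ s : F, ‖∑ x : F, χ (s * a₁ * x ^ d + (-m.1) * x)‖ *
        ‖∑ x : F, χ (s * a₂ * x ^ d + (-m.2) * x)‖ :=
      Finset.sum_nonneg fun s _ => by positivity
    have hs2nn : (0:ℝ) ≤ ∑ s : F, ‖∑ x : F, χ (s * a₁ * x ^ d + (-m.1) * x)‖ ^ 2 :=
      Finset.sum_nonneg fun s _ => sq_nonneg _
    have hAB : ∑ s : F, ‖∑ x : F, χ (s * a₁ * x ^ d + (-m.1) * x)‖ *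
        ‖∑ x : F, χ (s * a₂ * x ^ d + (-m.2) * x)‖ ≤ (d:ℝ) * (q:ℝ)^2 := by
      nlinarith [cs, m1, m2, hABnn, hs2nn, sq_nonneg ((d:ℝ) * (q:ℝ)^2)]
    calc ‖SS‖ ≤ ∑ s : F,
        ‖((∑ x : F, χ (s * a₁ * x ^ d + (-m.1) * x)) *
          (∑ x : F, χ (s * a₂ * x ^ d + (-m.2) * x))) *
        ((∑ y : F, χ (-(s * a₁) * y ^ d + 0 * y)) *
          (∑ y : F, χ (-(s * a₂) * y ^ d + 0 * y)))‖ := norm_sum_le _ _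
      _ ≤ ∑ s : F, (‖∑ x : F, χ (s * a₁ * x ^ d + (-m.1) * x)‖ *
            ‖∑ x : F, χ (s * a₂ * x ^ d + (-m.2) * x)‖) * (2 * (d:ℝ)^2 * q) :=
          Finset.sum_le_sum fun s _ => per s
      _ = (2 * (d:ℝ)^2 * q) * ∑ s : F, ‖∑ x : F, χ (s * a₁ * x ^ d + (-m.1) * x)‖ *
            ‖∑ x : F, χ (s * a₂ * x ^ d + (-m.2) * x)‖ := by
          rw [← Finset.sum_mul]; ring
      _ ≤ (2 * (d:ℝ)^2 * q) * ((d:ℝ) * (q:ℝ)^2) := by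
          refine mul_le_mul_of_nonneg_left hAB (by positivity)
      _ = 2 * (d:ℝ)^3 * (q:ℝ)^3 := by ring
  -- finish
  rw [norm_mul, norm_mul, norm_inv, norm_inv, norm_pow, Complex.norm_natCast]
  calc ((q:ℝ)^2)⁻¹ * ((q:ℝ)⁻¹ * ‖SS‖) = ‖SS‖ / (q:ℝ)^3 := by
        have hq0' : (q:ℝ) ≠ 0 := ne_of_gt hqpos
        rw [eq_div_iff (by positivity : ((q:ℝ)^3) ≠ 0)]
        field_simp
    _ ≤ (2 * (d:ℝ)^3 * (q:ℝ)^3) / (q:ℝ)^3 := by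
        exact (div_le_div_iff_of_pos_right (by positivity)).mpr keySS
    _ = 2 * (d:ℝ)^3 := by field_simp
end

section
/- Let q be an odd prime power with q ≡ 1 (mod 4), χ a canonical additive character of F_q, and for t ∈ F_q let V_t = {x ∈ F_q² : x₁² + x₂² = t}. Then for every m ∈ F_q², V̂_t(m) = q^{-1}δ₀(m) + q^{-2} ∑_{s ∈ F_q \ {0}} χ( (m₁²+m₂²)/(4s) + st ), where V̂_t(m) = q^{-2} ∑_{x ∈ F_q²} χ(-m·x) 1_{V_t}(x) and δ₀(m) = 1 if m = (0,0) and 0 otherwise. -/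
open Finset AddChar

noncomputable def qcC (F : Type*) [Field F] [Fintype F] [DecidableEq F] : MulChar F ℂ :=
  (quadraticChar F).ringHomComp (Int.castRingHom ℂ)

section aux
variable {F : Type*} [Field F] [Fintype F] [DecidableEq F]

lemma qcC_apply (a : F) : qcC F a = ((quadraticChar F a : ℤ) : ℂ) := rfl

lemma qcC_sq_one {c : F} (hc : c ≠ 0) : qcC F c * qcC F c = 1 := by
  have h := quadraticChar_sq_one hc
  rw [pow_two] at h
  rw [qcC_apply, ← Int.cast_mul, h, Int.cast_one]

lemma quad_sum (hF : ringChar F ≠ 2) (χ : AddChar F ℂ) (hχ : χ ≠ 1) {c : F} (hc : c ≠ 0) :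
    ∑ y : F, χ (c * y ^ 2) = qcC F c * gaussSum (qcC F) χ := by
  have h1 : ∑ y : F, χ (c * y ^ 2)
      = ∑ a : F, ∑ y ∈ Finset.univ.filter (fun y : F => y ^ 2 = a), χ (c * a) := by
    rw [← Finset.sum_fiberwise Finset.univ (fun y : F => y ^ 2) (fun y => χ (c * y ^ 2))]
    refine Finset.sum_congr rfl fun a _ => Finset.sum_congr rfl fun y hy => ?_
    rw [(Finset.mem_filter.mp hy).2]
  rw [h1]
  have h2 : ∀ a : F, (#(Finset.univ.filter (fun y : F => y ^ 2 = a)) : ℂ)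
      = qcC F a + 1 := by
    intro a
    have h := quadraticChar_card_sqrts hF a
    have hset : {x : F | x ^ 2 = a}.toFinset = Finset.univ.filter (fun y : F => y ^ 2 = a) := by
      ext y; simp
    rw [hset] at h
    rw [qcC_apply]
    exact_mod_cast congrArg (fun n : ℤ => (n : ℂ)) h
  simp_rw [Finset.sum_const, nsmul_eq_mul, h2, add_mul, one_mul, Finset.sum_add_distrib]
  have h3 : ∑ a : F, χ (c * a) = 0 := by
    have h := AddChar.sum_mulShift c (AddChar.IsPrimitive.of_ne_one hχ)
    simp_rw [mul_comm] at h
    rw [if_neg hc] at h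
    exact_mod_cast h
  rw [h3, add_zero]
  have h4 : ∑ a : F, qcC F a * χ (c * a) = gaussSum (qcC F) (χ.mulShift c) := by
    simp [gaussSum]
  rw [h4]
  have h5 := gaussSum_mulShift (qcC F) χ (Units.mk0 c hc)
  rw [show ((Units.mk0 c hc : F)) = c from rfl] at h5
  calc gaussSum (qcC F) (χ.mulShift c)
      = (qcC F c * qcC F c) * gaussSum (qcC F) (χ.mulShift c) := by rw [qcC_sq_one hc, one_mul]
    _ = qcC F c * (qcC F c * gaussSum (qcC F) (χ.mulShift c)) := by ring
    _ = qcC F c * gaussSum (qcC F) χ := by rw [h5]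

lemma complete_square (hF : ringChar F ≠ 2) (χ : AddChar F ℂ) (hχ : χ ≠ 1) {c : F} (hc : c ≠ 0)
    (b : F) :
    ∑ x : F, χ (c * x ^ 2 - b * x)
      = χ (-(b ^ 2 / (4 * c))) * (qcC F c * gaussSum (qcC F) χ) := by
  have h2 : (2 : F) ≠ 0 := Ring.two_ne_zero hF
  have key : ∀ y : F, c * (y + b / (2 * c)) ^ 2 - b * (y + b / (2 * c))
      = c * y ^ 2 + (-(b ^ 2 / (4 * c))) := by
    intro y
    have h4 : (4 : F) ≠ 0 := by
      rw [show (4 : F) = 2 * 2 by norm_num]; exact mul_ne_zero h2 h2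
    field_simp
    ring
  calc ∑ x : F, χ (c * x ^ 2 - b * x)
      = ∑ y : F, χ (c * (y + b / (2 * c)) ^ 2 - b * (y + b / (2 * c))) :=
        (Fintype.sum_equiv (Equiv.addRight (b / (2 * c))) _ _ (fun y => rfl)).symm
    _ = ∑ y : F, χ (c * y ^ 2) * χ (-(b ^ 2 / (4 * c))) := by
        simp_rw [key, map_add_eq_mul]
    _ = χ (-(b ^ 2 / (4 * c))) * (qcC F c * gaussSum (qcC F) χ) := by
        rw [← Finset.sum_mul, quad_sum hF χ hχ hc]; ring

end aux

/-- Explicit formula for the Fourier transform of the circle `V_t = {‖x‖₂ = t}` in `F_q²`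
when `q ≡ 1 (mod 4)`:
`V̂_t(m) = q⁻¹δ₀(m) + q⁻² ∑_{s ≠ 0} χ(‖m‖₂/(4s) + st)`. -/
theorem circle_fourier_formula (F : Type*) [Field F] [Fintype F] [DecidableEq F]
    (hodd : Odd (Fintype.card F)) (hq : Fintype.card F % 4 = 1)
    (χ : AddChar F ℂ) (hχ : χ ≠ 1) (t : F) (m : F × F) :
    ((Fintype.card F : ℂ) ^ 2)⁻¹ *
        ∑ x : F × F, (if x.1 ^ 2 + x.2 ^ 2 = t then χ (-(m.1 * x.1 + m.2 * x.2)) else 0)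
      = (Fintype.card F : ℂ)⁻¹ * (if m = (0, 0) then 1 else 0) +
        ((Fintype.card F : ℂ) ^ 2)⁻¹ *
          ∑ s ∈ Finset.univ \ {(0 : F)}, χ ((m.1 ^ 2 + m.2 ^ 2) / (4 * s) + s * t) := by
  have hF : ringChar F ≠ 2 := by
    intro h
    have h1 := FiniteField.even_card_of_char_two h
    have h2 := Nat.odd_iff.mp hodd
    omega
  set q : ℂ := (Fintype.card F : ℂ) with hqdef
  have hq0 : q ≠ 0 := by
    simp only [hqdef, Ne, Nat.cast_eq_zero]
    exact Fintype.card_ne_zero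
  have hprim : χ.IsPrimitive := AddChar.IsPrimitive.of_ne_one hχ
  set G : ℂ := gaussSum (qcC F) χ with hGdef
  -- Gauss sum square
  have hG2 : G ^ 2 = q := by
    have hne : qcC F ≠ 1 := by
      unfold qcC
      exact (MulChar.ringHomComp_ne_one_iff (RingHom.injective_int _)).mpr
        (quadraticChar_ne_one hF)
    have hquad : (qcC F).IsQuadratic := (quadraticChar_isQuadratic F).comp _
    have := gaussSum_sq hne hquad hprim
    rw [hGdef, this]
    have hneg : quadraticChar F (-1) = 1 := by
      rw [quadraticChar_neg_one hF]
      exact ZMod.χ₄_nat_one_mod_four hq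
    rw [qcC_apply, hneg]
    simp [hqdef]
  -- step 1: delta expansion per x
  have step1 : ∀ x : F × F,
      (if x.1 ^ 2 + x.2 ^ 2 = t then χ (-(m.1 * x.1 + m.2 * x.2)) else 0)
      = q⁻¹ * ∑ s : F,
          χ (s * x.1 ^ 2 - m.1 * x.1) * χ (s * x.2 ^ 2 - m.2 * x.2) * χ (-(s * t)) := by
    intro x
    have hcomb : ∀ s : F,
        χ (s * x.1 ^ 2 - m.1 * x.1) * χ (s * x.2 ^ 2 - m.2 * x.2) * χ (-(s * t))
        = χ (s * (x.1 ^ 2 + x.2 ^ 2 - t)) * χ (-(m.1 * x.1 + m.2 * x.2)) := by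
      intro s
      rw [← map_add_eq_mul, ← map_add_eq_mul, ← map_add_eq_mul]
      congr 1; ring
    simp_rw [hcomb]
    rw [← Finset.sum_mul]
    have hd := AddChar.sum_mulShift (x.1 ^ 2 + x.2 ^ 2 - t) hprim
    by_cases h : x.1 ^ 2 + x.2 ^ 2 = t
    · rw [if_pos h]
      rw [if_pos (sub_eq_zero.mpr h)] at hd
      rw [hd]
      field_simp
      rfl
    · rw [if_neg h]
      rw [if_neg (sub_ne_zero.mpr h)] at hd
      rw [hd]
      push_cast
      rw [zero_mul, mul_zero]
  -- swap sums
  have step2 : ∑ x : F × F, (if x.1 ^ 2 + x.2 ^ 2 = t then χ (-(m.1 * x.1 + m.2 * x.2)) else 0)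
      = q⁻¹ * ∑ s : F, (∑ x1 : F, χ (s * x1 ^ 2 - m.1 * x1)) *
          (∑ x2 : F, χ (s * x2 ^ 2 - m.2 * x2)) * χ (-(s * t)) := by
    simp_rw [step1]
    rw [← Finset.mul_sum]
    congr 1
    rw [Finset.sum_comm]
    refine Finset.sum_congr rfl fun s _ => ?_
    rw [Fintype.sum_prod_type, Finset.sum_mul_sum, Finset.sum_mul]
    refine Finset.sum_congr rfl fun x1 _ => ?_
    rw [Finset.sum_mul]
  -- value at s = 0
  set f : F → ℂ := fun s => (∑ x1 : F, χ (s * x1 ^ 2 - m.1 * x1)) *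
      (∑ x2 : F, χ (s * x2 ^ 2 - m.2 * x2)) * χ (-(s * t)) with hfdef
  have hf0 : f 0 = q ^ 2 * (if m = (0, 0) then 1 else 0) := by
    have e1 : ∀ x1 : F, (0 : F) * x1 ^ 2 - m.1 * x1 = x1 * (-m.1) := by intro x1; ring
    have e2 : ∀ x2 : F, (0 : F) * x2 ^ 2 - m.2 * x2 = x2 * (-m.2) := by intro x2; ring
    simp only [hfdef]
    simp_rw [e1, e2]
    rw [AddChar.sum_mulShift _ hprim, AddChar.sum_mulShift _ hprim]
    simp only [zero_mul, neg_zero, map_zero_eq_one, mul_one, neg_eq_zero]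
    by_cases h1 : m.1 = 0 <;> by_cases h2 : m.2 = 0 <;>
      simp [h1, h2, Prod.ext_iff, sq, hqdef]
  -- value at s ≠ 0
  have hfne : ∀ s ∈ Finset.univ \ {(0 : F)},
      f s = q * χ (-((m.1 ^ 2 + m.2 ^ 2) / (4 * s) + s * t)) := by
    intro s hs
    have hs0 : s ≠ 0 := by simpa using (Finset.mem_sdiff.mp hs).2
    have c1 := complete_square hF χ hχ hs0 m.1
    have c2 := complete_square hF χ hχ hs0 m.2
    simp only [hfdef]
    rw [c1, c2]
    have harg : -(m.1 ^ 2 / (4 * s)) + -(m.2 ^ 2 / (4 * s)) + -(s * t)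
        = -((m.1 ^ 2 + m.2 ^ 2) / (4 * s) + s * t) := by ring
    calc χ (-(m.1 ^ 2 / (4 * s))) * (qcC F s * G) * (χ (-(m.2 ^ 2 / (4 * s))) * (qcC F s * G))
        * χ (-(s * t))
        = (qcC F s * qcC F s) * G ^ 2 *
            (χ (-(m.1 ^ 2 / (4 * s))) * χ (-(m.2 ^ 2 / (4 * s))) * χ (-(s * t))) := by ring
      _ = q * χ (-((m.1 ^ 2 + m.2 ^ 2) / (4 * s) + s * t)) := by
          rw [qcC_sq_one hs0, hG2, one_mul, ← map_add_eq_mul, ← map_add_eq_mul, harg]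
  -- split off s = 0 and reindex
  have hsplit : ∑ s : F, f s = ∑ s ∈ Finset.univ \ {(0 : F)}, f s + f 0 := by
    rw [Finset.sum_eq_sum_sdiff_singleton_add (Finset.mem_univ (0 : F)) f]
  have hreindex : ∑ s ∈ Finset.univ \ {(0 : F)}, χ (-((m.1 ^ 2 + m.2 ^ 2) / (4 * s) + s * t))
      = ∑ s ∈ Finset.univ \ {(0 : F)}, χ ((m.1 ^ 2 + m.2 ^ 2) / (4 * s) + s * t) := by
    refine Finset.sum_equiv (Equiv.neg F) (fun s => by simp) (fun s hs => ?_)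
    have hs0 : s ≠ 0 := by simpa using (Finset.mem_sdiff.mp hs).2
    congr 1
    have h4 : (4 : F) ≠ 0 := by
      have h2 : (2 : F) ≠ 0 := Ring.two_ne_zero hF
      rw [show (4 : F) = 2 * 2 by norm_num]; exact mul_ne_zero h2 h2
    show -((m.1 ^ 2 + m.2 ^ 2) / (4 * s) + s * t)
        = (m.1 ^ 2 + m.2 ^ 2) / (4 * -s) + -s * t
    field_simp
    ring
  rw [step2, hsplit, hf0]
  rw [Finset.sum_congr rfl hfne, ← Finset.mul_sum, hreindex]
  have hq2 : (q ^ 2 : ℂ) ≠ 0 := pow_ne_zero 2 hq0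
  field_simp
  rw [add_comm]
  congr 1
  refine Finset.sum_congr rfl fun x _ => ?_
  congr 1; ring
end

section
/- Let q be an odd prime power, χ a canonical additive character of F_q, and for t ∈ F_q let V_t = {x ∈ F_q² : x₁²+x₂² = t} with Fourier transform V̂_t(m) = q^{-2}∑_{x∈F_q²}χ(-m·x)1_{V_t}(x). Then for all m, ξ ∈ F_q² \ {(0,0)}: ∑_{t ∈ F_q} V̂_t(m)·V̂_t(ξ) = q^{-3} ∑_{s ∈ F_q \ {0}} χ( s(‖m‖₂ − ‖ξ‖₂) ), where ‖x‖₂ = x₁² + x₂². -/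
open Finset

section CircleAux

variable {F : Type*} [Field F] [Fintype F] [DecidableEq F]

private lemma sum_char (χ : AddChar F ℂ) (hχ : χ ≠ 1) (a : F) :
    ∑ x : F, χ (a * x) = if a = 0 then (Fintype.card F : ℂ) else 0 := by
  split_ifs with h
  · simp [h]
  · have h1 : χ.mulShift a ≠ 1 := fun hc =>
      hχ ((AddChar.mulShift_unit_eq_one_iff χ (isUnit_iff_ne_zero.2 h)).mp hc)
    simpa using AddChar.sum_eq_zero_of_ne_one h1

private lemma quad_complete (χ : AddChar F ℂ) (h2 : (2 : F) ≠ 0) {s : F} (hs : s ≠ 0) (b : F) :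
    ∑ x : F, χ (s * x ^ 2 + b * x)
      = χ (-(b ^ 2) / (4 * s)) * ∑ x : F, χ (s * x ^ 2) := by
  have h4 : (4 : F) ≠ 0 := by
    have h : (4 : F) = 2 * 2 := by norm_num
    rw [h]; exact mul_ne_zero h2 h2
  rw [Finset.mul_sum]
  refine Fintype.sum_equiv (Equiv.addRight (b / (2 * s))) _ _ fun z => ?_
  simp only [Equiv.coe_addRight]
  rw [← AddChar.map_add_eq_mul]
  congr 1
  field_simp
  ring

private lemma gauss_prod (χ : AddChar F ℂ) (hχ : χ ≠ 1) (h2 : (2 : F) ≠ 0) {s : F}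
    (hs : s ≠ 0) :
    (∑ x : F, χ (s * x ^ 2)) * (∑ x : F, χ (-s * x ^ 2)) = (Fintype.card F : ℂ) := by
  calc (∑ x : F, χ (s * x ^ 2)) * (∑ x : F, χ (-s * x ^ 2))
      = ∑ p : F × F, χ (s * p.1 ^ 2) * χ (-s * p.2 ^ 2) := by
        rw [Fintype.sum_mul_sum, Fintype.sum_prod_type]
    _ = ∑ p : F × F, χ ((s * p.1) * p.2) := by
        refine Finset.sum_nbij' (fun p : F × F => (p.1 + p.2, p.1 - p.2))
          (fun p : F × F => ((p.1 + p.2) / 2, (p.1 - p.2) / 2))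
          (by simp) (by simp) ?_ ?_ ?_
        · intro p _
          refine Prod.ext ?_ ?_ <;> (simp only []; field_simp; ring)
        · intro p _
          refine Prod.ext ?_ ?_ <;> (simp only []; field_simp; ring)
        · intro p _
          rw [← AddChar.map_add_eq_mul]
          congr 1
          ring
    _ = ∑ u : F, ∑ v : F, χ ((s * u) * v) := Fintype.sum_prod_type _
    _ = ∑ u : F, if s * u = 0 then (Fintype.card F : ℂ) else 0 := by
        refine Finset.sum_congr rfl fun u _ => sum_char χ hχ _
    _ = (Fintype.card F : ℂ) := by
        simp [mul_eq_zero, hs]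

private lemma quad2 (χ : AddChar F ℂ) (h2 : (2 : F) ≠ 0) {s : F} (hs : s ≠ 0) (a b : F) :
    ∑ x : F × F, χ (s * (x.1 ^ 2 + x.2 ^ 2) - (a * x.1 + b * x.2))
      = χ (-(a ^ 2 + b ^ 2) / (4 * s)) *
          ((∑ u : F, χ (s * u ^ 2)) * ∑ u : F, χ (s * u ^ 2)) := by
  have h4 : (4 : F) ≠ 0 := by
    have h : (4 : F) = 2 * 2 := by norm_num
    rw [h]; exact mul_ne_zero h2 h2
  have key : ∀ x : F × F, χ (s * (x.1 ^ 2 + x.2 ^ 2) - (a * x.1 + b * x.2))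
      = χ (s * x.1 ^ 2 + (-a) * x.1) * χ (s * x.2 ^ 2 + (-b) * x.2) := by
    intro x
    rw [← AddChar.map_add_eq_mul]
    congr 1
    ring
  calc ∑ x : F × F, χ (s * (x.1 ^ 2 + x.2 ^ 2) - (a * x.1 + b * x.2))
      = (∑ u : F, χ (s * u ^ 2 + (-a) * u)) * ∑ u : F, χ (s * u ^ 2 + (-b) * u) := by
        rw [Fintype.sum_mul_sum, Fintype.sum_prod_type]
        exact Finset.sum_congr rfl fun u _ => Finset.sum_congr rfl fun v _ => key (u, v)
    _ = (χ (-((-a) ^ 2) / (4 * s)) * ∑ u : F, χ (s * u ^ 2)) *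
          (χ (-((-b) ^ 2) / (4 * s)) * ∑ u : F, χ (s * u ^ 2)) := by
        rw [quad_complete χ h2 hs (-a), quad_complete χ h2 hs (-b)]
    _ = (χ (-(a ^ 2) / (4 * s)) * χ (-(b ^ 2) / (4 * s))) *
          ((∑ u : F, χ (s * u ^ 2)) * ∑ u : F, χ (s * u ^ 2)) := by
        rw [neg_sq, neg_sq]; ring
    _ = χ (-(a ^ 2 + b ^ 2) / (4 * s)) *
          ((∑ u : F, χ (s * u ^ 2)) * ∑ u : F, χ (s * u ^ 2)) := by
        rw [← AddChar.map_add_eq_mul, ← add_div]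
        congr 2
        ring

private lemma step1 (χ : AddChar F ℂ) (hχ : χ ≠ 1) (v : F × F) (t : F) :
    ∑ x : F × F, (if x.1 ^ 2 + x.2 ^ 2 = t then χ (-(v.1 * x.1 + v.2 * x.2)) else 0)
      = (Fintype.card F : ℂ)⁻¹ *
          ∑ s : F, χ (-(s * t)) *
            ∑ x : F × F, χ (s * (x.1 ^ 2 + x.2 ^ 2) - (v.1 * x.1 + v.2 * x.2)) := by
  have hq0 : (Fintype.card F : ℂ) ≠ 0 := Nat.cast_ne_zero.2 Fintype.card_ne_zero
  have key : ∀ x : F × F,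
      ∑ s : F, χ (-(s * t)) * χ (s * (x.1 ^ 2 + x.2 ^ 2) - (v.1 * x.1 + v.2 * x.2))
        = χ (-(v.1 * x.1 + v.2 * x.2)) *
            (if (x.1 ^ 2 + x.2 ^ 2) - t = 0 then (Fintype.card F : ℂ) else 0) := by
    intro x
    rw [← sum_char χ hχ ((x.1 ^ 2 + x.2 ^ 2) - t), Finset.mul_sum]
    refine Finset.sum_congr rfl fun s _ => ?_
    rw [← AddChar.map_add_eq_mul, ← AddChar.map_add_eq_mul]
    congr 1
    ring
  simp_rw [Finset.mul_sum]
  rw [Finset.sum_comm]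
  simp_rw [← Finset.mul_sum, key]
  rw [Finset.mul_sum]
  refine Finset.sum_congr rfl fun x _ => ?_
  by_cases hx : x.1 ^ 2 + x.2 ^ 2 = t
  · rw [if_pos hx, if_pos (sub_eq_zero.2 hx)]
    field_simp
  · rw [if_neg hx, if_neg (fun hc => hx (sub_eq_zero.1 hc)), mul_zero, mul_zero]

end CircleAux

/-- For circles `V_t = {‖x‖₂ = t}` in `F_q²` (`q` odd) and `m, ξ ≠ (0,0)`:
`∑_t V̂_t(m)·V̂_t(ξ) = q⁻³ ∑_{s ≠ 0} χ(s(‖m‖₂ − ‖ξ‖₂))`. -/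
theorem circle_double_fourier_decay (F : Type*) [Field F] [Fintype F] [DecidableEq F]
    (hodd : Odd (Fintype.card F)) (χ : AddChar F ℂ) (hχ : χ ≠ 1)
    (m ξ : F × F) (hm : m ≠ (0, 0)) (hξ : ξ ≠ (0, 0)) :
    ∑ t : F,
        (((Fintype.card F : ℂ) ^ 2)⁻¹ *
          ∑ x : F × F, (if x.1 ^ 2 + x.2 ^ 2 = t then χ (-(m.1 * x.1 + m.2 * x.2)) else 0)) *
        (((Fintype.card F : ℂ) ^ 2)⁻¹ *
          ∑ x : F × F, (if x.1 ^ 2 + x.2 ^ 2 = t then χ (-(ξ.1 * x.1 + ξ.2 * x.2)) else 0))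
      = ((Fintype.card F : ℂ) ^ 3)⁻¹ *
          ∑ s ∈ Finset.univ \ {(0 : F)}, χ (s * ((m.1 ^ 2 + m.2 ^ 2) - (ξ.1 ^ 2 + ξ.2 ^ 2))) := by
  classical
  have hq0 : (Fintype.card F : ℂ) ≠ 0 := Nat.cast_ne_zero.2 Fintype.card_ne_zero
  have hchar : ringChar F ≠ 2 := by
    intro h
    have h1 := FiniteField.even_card_of_char_two h
    rw [Nat.odd_iff] at hodd
    omega
  have h2 : (2 : F) ≠ 0 := Ring.two_ne_zero hchar
  have h4 : (4 : F) ≠ 0 := by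
    have h : (4 : F) = 2 * 2 := by norm_num
    rw [h]; exact mul_ne_zero h2 h2
  set f : F → ℂ :=
    fun s => ∑ x : F × F, χ (s * (x.1 ^ 2 + x.2 ^ 2) - (m.1 * x.1 + m.2 * x.2)) with hf
  set g : F → ℂ :=
    fun s => ∑ x : F × F, χ (s * (x.1 ^ 2 + x.2 ^ 2) - (ξ.1 * x.1 + ξ.2 * x.2)) with hg
  -- vanishing at s = 0
  have hzero : ∀ (v : F × F), v ≠ (0, 0) →
      (∑ x : F × F, χ ((0 : F) * (x.1 ^ 2 + x.2 ^ 2) - (v.1 * x.1 + v.2 * x.2))) = 0 := by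
    intro v hv
    have key : ∀ x : F × F, χ ((0 : F) * (x.1 ^ 2 + x.2 ^ 2) - (v.1 * x.1 + v.2 * x.2))
        = χ ((-v.1) * x.1) * χ ((-v.2) * x.2) := by
      intro x
      rw [← AddChar.map_add_eq_mul]
      congr 1
      ring
    have hfac : (∑ x : F × F, χ ((0 : F) * (x.1 ^ 2 + x.2 ^ 2) - (v.1 * x.1 + v.2 * x.2)))
        = (∑ u : F, χ ((-v.1) * u)) * ∑ u : F, χ ((-v.2) * u) := by
      rw [Fintype.sum_mul_sum, Fintype.sum_prod_type]
      exact Finset.sum_congr rfl fun u _ => Finset.sum_congr rfl fun w _ => key (u, w)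
    rw [hfac, sum_char χ hχ, sum_char χ hχ]
    have hv' : v.1 ≠ 0 ∨ v.2 ≠ 0 := by
      by_contra h
      push_neg at h
      exact hv (Prod.ext h.1 h.2)
    rcases hv' with h | h
    · simp [neg_eq_zero, h]
    · simp [neg_eq_zero, h]
  have hf0 : f 0 = 0 := hzero m hm
  have hg0 : g 0 = 0 := hzero ξ hξ
  -- Step 1 and collection of constants
  have step0 : (∑ t : F,
        (((Fintype.card F : ℂ) ^ 2)⁻¹ *
          ∑ x : F × F, (if x.1 ^ 2 + x.2 ^ 2 = t then χ (-(m.1 * x.1 + m.2 * x.2)) else 0)) *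
        (((Fintype.card F : ℂ) ^ 2)⁻¹ *
          ∑ x : F × F, (if x.1 ^ 2 + x.2 ^ 2 = t then χ (-(ξ.1 * x.1 + ξ.2 * x.2)) else 0)))
      = ((Fintype.card F : ℂ) ^ 6)⁻¹ *
          ∑ t : F, (∑ s : F, χ (-(s * t)) * f s) * (∑ s : F, χ (-(s * t)) * g s) := by
    rw [Finset.mul_sum]
    refine Finset.sum_congr rfl fun t _ => ?_
    rw [step1 χ hχ m t, step1 χ hχ ξ t]
    ring
  -- orthogonality in t
  have hT : (∑ t : F, (∑ s : F, χ (-(s * t)) * f s) * (∑ s : F, χ (-(s * t)) * g s))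
      = (Fintype.card F : ℂ) * ∑ s : F, f s * g (-s) := by
    calc (∑ t : F, (∑ s : F, χ (-(s * t)) * f s) * (∑ s : F, χ (-(s * t)) * g s))
        = ∑ t : F, ∑ s : F, ∑ s' : F,
            (f s * g s') * (χ (-(s * t)) * χ (-(s' * t))) := by
          refine Finset.sum_congr rfl fun t _ => ?_
          rw [Fintype.sum_mul_sum]
          exact Finset.sum_congr rfl fun s _ => Finset.sum_congr rfl fun s' _ => by ring
      _ = ∑ s : F, ∑ t : F, ∑ s' : F,
            (f s * g s') * (χ (-(s * t)) * χ (-(s' * t))) := Finset.sum_comm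
      _ = ∑ s : F, ∑ s' : F, ∑ t : F,
            (f s * g s') * (χ (-(s * t)) * χ (-(s' * t))) :=
          Finset.sum_congr rfl fun s _ => Finset.sum_comm
      _ = ∑ s : F, ∑ s' : F, (f s * g s') * ∑ t : F, χ ((-(s + s')) * t) := by
          refine Finset.sum_congr rfl fun s _ => Finset.sum_congr rfl fun s' _ => ?_
          rw [Finset.mul_sum univ (fun t : F => χ ((-(s + s')) * t)) (f s * g s')]
          refine Finset.sum_congr rfl fun t _ => ?_
          congr 1
          rw [← AddChar.map_add_eq_mul]
          congr 1
          ring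
      _ = ∑ s : F, ∑ s' : F,
            (if s' = -s then (f s * g s') * (Fintype.card F : ℂ) else 0) := by
          refine Finset.sum_congr rfl fun s _ => Finset.sum_congr rfl fun s' _ => ?_
          have hcond : -(s + s') = 0 ↔ s' = -s := by
            rw [neg_eq_zero]
            constructor
            · intro hh
              have hh' : s' + s = 0 := by rw [add_comm]; exact hh
              exact eq_neg_of_add_eq_zero_left hh'
            · intro hh; rw [hh]; ring
          rw [sum_char χ hχ, if_congr hcond rfl rfl, mul_ite, mul_zero]
      _ = ∑ s : F, (f s * g (-s)) * (Fintype.card F : ℂ) := by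
          refine Finset.sum_congr rfl fun s _ => ?_
          rw [Finset.sum_ite_eq' univ (-s) (fun s' => (f s * g s') * (Fintype.card F : ℂ))]
          simp
      _ = (Fintype.card F : ℂ) * ∑ s : F, f s * g (-s) := by
          rw [← Finset.sum_mul]; ring
  -- drop s = 0
  have hsplit : (∑ s : F, f s * g (-s)) = ∑ s ∈ univ \ {(0 : F)}, f s * g (-s) := by
    refine (Finset.sum_subset (Finset.subset_univ _) ?_).symm
    intro x _ hx
    have hx0 : x = 0 := by simpa using hx
    rw [hx0, hf0, zero_mul]
  -- evaluation for s ≠ 0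
  have hprod : ∀ s : F, s ≠ 0 → f s * g (-s)
      = (Fintype.card F : ℂ) ^ 2 *
          χ (((ξ.1 ^ 2 + ξ.2 ^ 2) - (m.1 ^ 2 + m.2 ^ 2)) / (4 * s)) := by
    intro s hs
    have hns : (-s : F) ≠ 0 := neg_ne_zero.2 hs
    have hfs : f s = χ (-(m.1 ^ 2 + m.2 ^ 2) / (4 * s)) *
        ((∑ u : F, χ (s * u ^ 2)) * ∑ u : F, χ (s * u ^ 2)) := quad2 χ h2 hs m.1 m.2
    have hgs : g (-s) = χ (-(ξ.1 ^ 2 + ξ.2 ^ 2) / (4 * (-s))) *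
        ((∑ u : F, χ ((-s) * u ^ 2)) * ∑ u : F, χ ((-s) * u ^ 2)) := quad2 χ h2 hns ξ.1 ξ.2
    have hGH := gauss_prod χ hχ h2 hs
    have harg : -(m.1 ^ 2 + m.2 ^ 2) / (4 * s) + -(ξ.1 ^ 2 + ξ.2 ^ 2) / (4 * (-s))
        = ((ξ.1 ^ 2 + ξ.2 ^ 2) - (m.1 ^ 2 + m.2 ^ 2)) / (4 * s) := by
      field_simp
      ring
    calc f s * g (-s)
        = (χ (-(m.1 ^ 2 + m.2 ^ 2) / (4 * s)) * χ (-(ξ.1 ^ 2 + ξ.2 ^ 2) / (4 * (-s)))) *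
            (((∑ u : F, χ (s * u ^ 2)) * ∑ u : F, χ ((-s) * u ^ 2)) *
              ((∑ u : F, χ (s * u ^ 2)) * ∑ u : F, χ ((-s) * u ^ 2))) := by
          rw [hfs, hgs]; ring
      _ = χ (((ξ.1 ^ 2 + ξ.2 ^ 2) - (m.1 ^ 2 + m.2 ^ 2)) / (4 * s)) *
            ((Fintype.card F : ℂ) * (Fintype.card F : ℂ)) := by
          rw [← AddChar.map_add_eq_mul, harg, hGH]
      _ = (Fintype.card F : ℂ) ^ 2 *
            χ (((ξ.1 ^ 2 + ξ.2 ^ 2) - (m.1 ^ 2 + m.2 ^ 2)) / (4 * s)) := by ring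
  -- reindexing s ↦ -(4s)⁻¹
  have hre : (∑ s ∈ univ \ {(0 : F)},
        χ (((ξ.1 ^ 2 + ξ.2 ^ 2) - (m.1 ^ 2 + m.2 ^ 2)) / (4 * s)))
      = ∑ s ∈ univ \ {(0 : F)}, χ (s * ((m.1 ^ 2 + m.2 ^ 2) - (ξ.1 ^ 2 + ξ.2 ^ 2))) := by
    refine Finset.sum_nbij' (fun s => -(4 * s)⁻¹) (fun s => -(4 * s)⁻¹) ?_ ?_ ?_ ?_ ?_
    · intro a ha
      have ha0 : a ≠ 0 := by simpa using ha
      simp [ha0, h4]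
    · intro a ha
      have ha0 : a ≠ 0 := by simpa using ha
      simp [ha0, h4]
    · intro a ha
      have ha0 : a ≠ 0 := by simpa using ha
      field_simp
    · intro a ha
      have ha0 : a ≠ 0 := by simpa using ha
      field_simp
    · intro a ha
      have ha0 : a ≠ 0 := by simpa using ha
      congr 1
      field_simp
      ring
  -- assemble
  rw [step0, hT, hsplit, Finset.sum_congr rfl fun s hs => hprod s (by simpa using hs),
    ← Finset.mul_sum, hre]
  field_simp
  ring
  exact Finset.sum_congr rfl fun x _ => by congr 1; ring
end

section
/- Let q ≡ 1 (mod 4) be an odd prime power and E, F ⊆ F_q² with |E||F| ≳ q². Let ν(0) = |{(x,y) ∈ E×F : ‖x−y‖₂ = 0}| where ‖x‖₂ = x₁²+x₂². Then ν(0) = O(q^{-1}|E||F|) + q³ ∑_{m ∈ V₀} conj(Ê(m))·F̂(m), where V₀ = {m ∈ F_q² : ‖m‖₂ = 0} and Ê(m) = q^{-2}∑_{x∈E}χ(-x·m). -/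
open Finset

section aux
variable {K : Type} [Field K] [Fintype K] [DecidableEq K]

-- sum over the zero sphere
lemma sphere_sum (χ : AddChar K ℂ) (hχ : χ ≠ 1) (i : K) (hi : i * i = -1)
    (h2 : (2 : K) ≠ 0) (z : K × K) :
    ∑ m ∈ univ.filter (fun m : K × K => m.1 ^ 2 + m.2 ^ 2 = 0),
        χ (z.1 * m.1 + z.2 * m.2)
      = (if i * z.1 + z.2 = 0 then (Fintype.card K : ℂ) else 0)
        + (if (-i) * z.1 + z.2 = 0 then (Fintype.card K : ℂ) else 0) - 1 := by
  classical
  have hprim : χ.IsPrimitive := AddChar.IsPrimitive.of_ne_one hχ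
  have hinez : i ≠ 0 := by
    intro h; rw [h, zero_mul] at hi; exact one_ne_zero (neg_eq_zero.mp hi.symm)
  set A : Finset (K × K) := univ.filter (fun m : K × K => m.1 = i * m.2) with hA
  set B : Finset (K × K) := univ.filter (fun m : K × K => m.1 = -i * m.2) with hB
  have hfactor : ∀ m : K × K, (m.1 ^ 2 + m.2 ^ 2 = 0) ↔ (m.1 = i * m.2 ∨ m.1 = -i * m.2) := by
    intro m
    constructor
    · intro h
      have : (m.1 - i * m.2) * (m.1 + i * m.2) = 0 := by linear_combination h - m.2 ^ 2 * hi
      rcases mul_eq_zero.mp this with h' | h'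
      · left; linear_combination h'
      · right; linear_combination h'
    · rintro (h | h) <;> rw [h] <;> linear_combination m.2 ^ 2 * hi
  have hset : univ.filter (fun m : K × K => m.1 ^ 2 + m.2 ^ 2 = 0) = A ∪ B := by
    ext m
    simp only [hA, hB, mem_union, mem_filter, mem_univ, true_and, hfactor m]
  have hAB : A ∩ B = {((0 : K), (0 : K))} := by
    ext m
    simp only [hA, hB, mem_inter, mem_filter, mem_univ, true_and, mem_singleton]
    constructor
    · rintro ⟨h1, h1'⟩
      have h3 : 2 * i * m.2 = 0 := by linear_combination h1' - h1
      have h4 : m.2 = 0 := by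
        rcases mul_eq_zero.mp h3 with h | h
        · exact (mul_ne_zero h2 hinez h).elim
        · exact h
      have h5 : m.1 = 0 := by rw [h1, h4, mul_zero]
      exact Prod.ext h5 h4
    · rintro rfl; simp
  have himg : ∀ j : K, j ≠ 0 → (univ.filter (fun m : K × K => m.1 = j * m.2) : Finset (K × K))
      = univ.image (fun t : K => (j * t, t)) := by
    intro j _
    ext m
    simp only [mem_filter, mem_univ, true_and, mem_image]
    constructor
    · intro h; exact ⟨m.2, by rw [← h]⟩
    · rintro ⟨t, rfl⟩; rfl
  have hsum : ∀ j : K, j ≠ 0 →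
      ∑ m ∈ univ.filter (fun m : K × K => m.1 = j * m.2), χ (z.1 * m.1 + z.2 * m.2)
        = if j * z.1 + z.2 = 0 then (Fintype.card K : ℂ) else 0 := by
    intro j hj
    rw [himg j hj, Finset.sum_image (fun t _ t' _ h => ((Prod.mk.injEq _ _ _ _).mp h).2)]
    have : ∀ t : K, z.1 * (j * t) + z.2 * t = t * (j * z.1 + z.2) := by intro t; ring
    simp_rw [this]
    rw [AddChar.sum_mulShift _ hprim]
    split_ifs <;> simp
  have hsingle : ∑ m ∈ A ∩ B, χ (z.1 * m.1 + z.2 * m.2) = 1 := by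
    rw [hAB, Finset.sum_singleton]
    simp
  have hunion : (∑ m ∈ A ∪ B, χ (z.1 * m.1 + z.2 * m.2))
      + ∑ m ∈ A ∩ B, χ (z.1 * m.1 + z.2 * m.2)
      = (∑ m ∈ A, χ (z.1 * m.1 + z.2 * m.2)) + ∑ m ∈ B, χ (z.1 * m.1 + z.2 * m.2) :=
    Finset.sum_union_inter
  have e1 := hsum i hinez
  have e2 := hsum (-i) (neg_ne_zero.mpr hinez)
  rw [← hA] at e1
  rw [← hB] at e2
  rw [hsingle] at hunion
  rw [hset]
  linear_combination hunion + e1 + e2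

lemma pointwise (q : ℕ) (hq : (q : ℂ) ≠ 0) (i : K) (hi : i * i = -1) (h2 : (2 : K) ≠ 0)
    (x y : K × K) :
    ((if (x.1 - y.1) ^ 2 + (x.2 - y.2) ^ 2 = 0 then (1 : ℂ) else 0)
      - (q : ℂ)⁻¹ * ((if i * (x.1 - y.1) + (x.2 - y.2) = 0 then (q : ℂ) else 0)
          + (if -i * (x.1 - y.1) + (x.2 - y.2) = 0 then (q : ℂ) else 0) - 1))
    = (q : ℂ)⁻¹ - (if x = y then 1 else 0) := by
  classical
  set a := x.1 - y.1 with ha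
  set b := x.2 - y.2 with hb
  have hinez : i ≠ 0 := by
    intro h; rw [h, zero_mul] at hi; exact one_ne_zero (neg_eq_zero.mp hi.symm)
  have hfac : (a ^ 2 + b ^ 2 = 0) ↔ (i * a + b = 0 ∨ -i * a + b = 0) := by
    constructor
    · intro h
      have : (i * a + b) * (-i * a + b) = 0 := by linear_combination h - a ^ 2 * hi
      exact mul_eq_zero.mp this
    · rintro (h | h)
      · linear_combination (-i * a + b) * h + a ^ 2 * hi
      · linear_combination (i * a + b) * h + a ^ 2 * hi
  have hxy : x = y ↔ (a = 0 ∧ b = 0) := by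
    rw [Prod.ext_iff, ha, hb, sub_eq_zero, sub_eq_zero]
  by_cases hA : i * a + b = 0 <;> by_cases hB : -i * a + b = 0
  · have ha0 : a = 0 := by
      have h3 : 2 * i * a = 0 := by linear_combination hA - hB
      rcases mul_eq_zero.mp h3 with h | h
      · exact (mul_ne_zero h2 hinez h).elim
      · exact h
    have hb0 : b = 0 := by linear_combination hA - i * ha0
    rw [if_pos (hfac.mpr (Or.inl hA)), if_pos hA, if_pos hB, if_pos (hxy.mpr ⟨ha0, hb0⟩)]
    field_simp
    ring
  · rw [if_pos (hfac.mpr (Or.inl hA)), if_pos hA, if_neg hB,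
      if_neg (fun h => hB (by rw [(hxy.mp h).1, (hxy.mp h).2]; ring))]
    field_simp
    ring
  · rw [if_pos (hfac.mpr (Or.inr hB)), if_neg hA, if_pos hB,
      if_neg (fun h => hA (by rw [(hxy.mp h).1, (hxy.mp h).2]; ring))]
    field_simp
    ring
  · rw [if_neg (fun h => by rcases hfac.mp h with h' | h'; exacts [hA h', hB h']),
      if_neg hA, if_neg hB,
      if_neg (fun h => hA (by rw [(hxy.mp h).1, (hxy.mp h).2]; ring))]
    field_simp
    ring

lemma key_identity (h4 : Fintype.card K % 4 = 1) (hodd : Odd (Fintype.card K))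
    (χ : AddChar K ℂ) (hχ : χ ≠ 1) (E F' : Finset (K × K)) (Ehat Fhat : K × K → ℂ)
    (hE : ∀ m : K × K,
      Ehat m = ((Fintype.card K : ℂ) ^ 2)⁻¹ * ∑ x ∈ E, χ (-(x.1 * m.1 + x.2 * m.2)))
    (hF : ∀ m : K × K,
      Fhat m = ((Fintype.card K : ℂ) ^ 2)⁻¹ * ∑ y ∈ F', χ (-(y.1 * m.1 + y.2 * m.2))) :
    ((((E ×ˢ F').filter
          (fun p : (K × K) × (K × K) =>
            (p.1.1 - p.2.1) ^ 2 + (p.1.2 - p.2.2) ^ 2 = 0)).card : ℂ)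
        - (Fintype.card K : ℂ) ^ 3 *
          (∑ m ∈ Finset.univ.filter (fun m : K × K => m.1 ^ 2 + m.2 ^ 2 = 0),
            (starRingEnd ℂ) (Ehat m) * Fhat m))
      = (Fintype.card K : ℂ)⁻¹ * E.card * F'.card - ((E ∩ F').card : ℂ) := by
  classical
  set q : ℕ := Fintype.card K with hqdef
  have hq : (q : ℂ) ≠ 0 := Nat.cast_ne_zero.mpr Fintype.card_ne_zero
  obtain ⟨i, hi'⟩ : IsSquare (-1 : K) :=
    FiniteField.isSquare_neg_one_iff.mpr (by omega)
  have hi : i * i = -1 := hi'.symm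
  have hchar2 : ringChar K ≠ 2 := by
    intro h
    have h' := FiniteField.even_card_iff_char_two.mp h
    have h'' : Fintype.card K % 2 = 1 := Nat.odd_iff.mp hodd
    omega
  have h2 : (2 : K) ≠ 0 := Ring.two_ne_zero hchar2
  have hR : 0 < ringChar K := Nat.pos_of_ne_zero (CharP.ringChar_ne_zero_of_finite K)
  have hconj : ∀ a : K, (starRingEnd ℂ) (χ (-a)) = χ a := fun a => by
    rw [AddChar.starComp_apply hR, AddChar.inv_apply, neg_neg]
  have hterm : ∀ m : K × K, (starRingEnd ℂ) (Ehat m) * Fhat m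
      = ((q : ℂ) ^ 4)⁻¹ * ∑ x ∈ E, ∑ y ∈ F',
          χ ((x.1 - y.1) * m.1 + (x.2 - y.2) * m.2) := by
    intro m
    rw [hE m, hF m, map_mul, map_inv₀, map_pow, Complex.conj_natCast, map_sum]
    simp_rw [hconj]
    rw [mul_mul_mul_comm, Finset.sum_mul_sum]
    rw [← mul_inv, ← pow_add]
    refine congrArg₂ _ rfl (Finset.sum_congr rfl fun x _ => Finset.sum_congr rfl fun y _ => ?_)
    rw [← AddChar.map_add_eq_mul]
    congr 1
    ring
  have hT : (q : ℂ) ^ 3 *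
      (∑ m ∈ Finset.univ.filter (fun m : K × K => m.1 ^ 2 + m.2 ^ 2 = 0),
        (starRingEnd ℂ) (Ehat m) * Fhat m)
      = ∑ x ∈ E, ∑ y ∈ F', (q : ℂ)⁻¹ *
          ((if i * (x.1 - y.1) + (x.2 - y.2) = 0 then (q : ℂ) else 0)
            + (if -i * (x.1 - y.1) + (x.2 - y.2) = 0 then (q : ℂ) else 0) - 1) := by
    simp_rw [hterm]
    rw [← Finset.mul_sum]
    have hswap : ∑ m ∈ Finset.univ.filter (fun m : K × K => m.1 ^ 2 + m.2 ^ 2 = 0),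
          ∑ x ∈ E, ∑ y ∈ F', χ ((x.1 - y.1) * m.1 + (x.2 - y.2) * m.2)
        = ∑ x ∈ E, ∑ y ∈ F',
            ∑ m ∈ Finset.univ.filter (fun m : K × K => m.1 ^ 2 + m.2 ^ 2 = 0),
              χ ((x.1 - y.1) * m.1 + (x.2 - y.2) * m.2) := by
      rw [Finset.sum_comm]
      exact Finset.sum_congr rfl fun x _ => Finset.sum_comm
    rw [hswap]
    have hsph : ∀ x y : K × K,
        ∑ m ∈ Finset.univ.filter (fun m : K × K => m.1 ^ 2 + m.2 ^ 2 = 0),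
          χ ((x.1 - y.1) * m.1 + (x.2 - y.2) * m.2)
        = (if i * (x.1 - y.1) + (x.2 - y.2) = 0 then (q : ℂ) else 0)
          + (if -i * (x.1 - y.1) + (x.2 - y.2) = 0 then (q : ℂ) else 0) - 1 := fun x y =>
      sphere_sum χ hχ i hi h2 (x.1 - y.1, x.2 - y.2)
    simp_rw [hsph]
    have hc : (q : ℂ) ^ 3 * ((q : ℂ) ^ 4)⁻¹ = (q : ℂ)⁻¹ := by
      field_simp
    rw [← mul_assoc, hc, Finset.mul_sum]
    refine Finset.sum_congr rfl fun x _ => ?_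
    rw [Finset.mul_sum]
  have hν : (((E ×ˢ F').filter
        (fun p : (K × K) × (K × K) =>
          (p.1.1 - p.2.1) ^ 2 + (p.1.2 - p.2.2) ^ 2 = 0)).card : ℂ)
      = ∑ x ∈ E, ∑ y ∈ F',
          (if (x.1 - y.1) ^ 2 + (x.2 - y.2) ^ 2 = 0 then (1 : ℂ) else 0) := by
    simp only [Finset.card_filter, Finset.sum_product, Nat.cast_sum, Nat.cast_ite,
      Nat.cast_one, Nat.cast_zero]
  rw [hν, hT, ← Finset.sum_sub_distrib]
  simp_rw [← Finset.sum_sub_distrib]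
  have hpt : ∀ x ∈ E, ∀ y ∈ F',
      ((if (x.1 - y.1) ^ 2 + (x.2 - y.2) ^ 2 = 0 then (1 : ℂ) else 0)
        - (q : ℂ)⁻¹ * ((if i * (x.1 - y.1) + (x.2 - y.2) = 0 then (q : ℂ) else 0)
            + (if -i * (x.1 - y.1) + (x.2 - y.2) = 0 then (q : ℂ) else 0) - 1))
      = (q : ℂ)⁻¹ - (if x = y then 1 else 0) := fun x _ y _ =>
    pointwise q hq i hi h2 x y
  rw [Finset.sum_congr rfl fun x hx => Finset.sum_congr rfl fun y hy => hpt x hx y hy]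
  simp_rw [Finset.sum_sub_distrib, Finset.sum_const, nsmul_eq_mul, Finset.sum_ite_eq]
  have hinter : ∑ x ∈ E, (if x ∈ F' then (1 : ℂ) else 0) = ((E ∩ F').card : ℂ) := by
    rw [Finset.sum_ite_mem, Finset.sum_const, nsmul_eq_mul, mul_one]
  rw [hinter]
  ring

end aux

/-- For `q ≡ 1 (mod 4)` and `E, F ⊆ F_q²` with `|E||F| ≳ q²`, the number `ν(0)` of pairs at
distance zero satisfies `ν(0) = O(q⁻¹|E||F|) + q³ ∑_{m ∈ V₀} conj(Ê(m))·F̂(m)`. -/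
theorem zero_distance_count (c : ℝ) (hc : 0 < c) :
    ∃ C : ℝ, ∀ (F : Type) [Field F] [Fintype F] [DecidableEq F],
      Fintype.card F % 4 = 1 → Odd (Fintype.card F) →
      ∀ χ : AddChar F ℂ, χ ≠ 1 →
      ∀ E F' : Finset (F × F),
        c * (Fintype.card F : ℝ) ^ 2 ≤ (E.card : ℝ) * F'.card →
        ∀ Ehat Fhat : F × F → ℂ,
          (∀ m : F × F,
            Ehat m = ((Fintype.card F : ℂ) ^ 2)⁻¹ * ∑ x ∈ E, χ (-(x.1 * m.1 + x.2 * m.2))) →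
          (∀ m : F × F,
            Fhat m = ((Fintype.card F : ℂ) ^ 2)⁻¹ * ∑ y ∈ F', χ (-(y.1 * m.1 + y.2 * m.2))) →
          ‖((((E ×ˢ F').filter
                (fun p : (F × F) × (F × F) =>
                  (p.1.1 - p.2.1) ^ 2 + (p.1.2 - p.2.2) ^ 2 = 0)).card : ℂ) -
              (Fintype.card F : ℂ) ^ 3 *
                (∑ m ∈ Finset.univ.filter (fun m : F × F => m.1 ^ 2 + m.2 ^ 2 = 0),
                  (starRingEnd ℂ) (Ehat m) * Fhat m))‖
            ≤ C * (Fintype.card F : ℝ)⁻¹ * ((E.card : ℝ) * F'.card) := by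
  refine ⟨1 + (Real.sqrt c)⁻¹, ?_⟩
  intro F _ _ _ h4 hodd χ hχ E F' hcard Ehat Fhat hE hF
  rw [key_identity h4 hodd χ hχ E F' Ehat Fhat hE hF]
  set q : ℕ := Fintype.card F with hqdef
  set a : ℝ := (E.card : ℝ) with hadef
  set b : ℝ := (F'.card : ℝ) with hbdef
  set k : ℝ := ((E ∩ F').card : ℝ) with hkdef
  have hqpos : (0 : ℝ) < q := Nat.cast_pos.mpr Fintype.card_pos
  have ha0 : 0 ≤ a := Nat.cast_nonneg _
  have hb0 : 0 ≤ b := Nat.cast_nonneg _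
  have hk0 : 0 ≤ k := Nat.cast_nonneg _
  have hcast : ((q : ℂ)⁻¹ * (E.card : ℂ) * (F'.card : ℂ) - ((E ∩ F').card : ℂ))
      = ((((q : ℝ)⁻¹ * a * b - k : ℝ)) : ℂ) := by
    rw [hadef, hbdef, hkdef]
    push_cast
    ring
  rw [hcast, Complex.norm_real, Real.norm_eq_abs]
  have hX0 : 0 ≤ (q : ℝ)⁻¹ * a * b := by positivity
  have habs : |(q : ℝ)⁻¹ * a * b - k| ≤ (q : ℝ)⁻¹ * a * b + k := by
    calc |(q : ℝ)⁻¹ * a * b - k| ≤ |(q : ℝ)⁻¹ * a * b| + |k| := abs_sub _ _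
      _ = (q : ℝ)⁻¹ * a * b + k := by rw [abs_of_nonneg hX0, abs_of_nonneg hk0]
  have hsqab : Real.sqrt c * q ≤ Real.sqrt (a * b) := by
    have h1 : Real.sqrt (c * q ^ 2) ≤ Real.sqrt (a * b) := Real.sqrt_le_sqrt hcard
    rwa [Real.sqrt_mul hc.le, Real.sqrt_sq hqpos.le] at h1
  have hkab : k ≤ Real.sqrt (a * b) := by
    have h1 : k ^ 2 ≤ a * b := by
      have h2 : (E ∩ F').card ≤ E.card := Finset.card_le_card Finset.inter_subset_left
      have h3 : (E ∩ F').card ≤ F'.card := Finset.card_le_card Finset.inter_subset_right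
      have h2' : k ≤ a := Nat.cast_le.mpr h2
      have h3' : k ≤ b := Nat.cast_le.mpr h3
      nlinarith
    calc k = Real.sqrt (k ^ 2) := (Real.sqrt_sq hk0).symm
      _ ≤ Real.sqrt (a * b) := Real.sqrt_le_sqrt h1
  have hprod : Real.sqrt c * q * k ≤ a * b := by
    calc Real.sqrt c * q * k ≤ Real.sqrt (a * b) * Real.sqrt (a * b) :=
          mul_le_mul hsqab hkab hk0 (Real.sqrt_nonneg _)
      _ = a * b := Real.mul_self_sqrt (by positivity)
  have hsc : (0 : ℝ) < Real.sqrt c := Real.sqrt_pos.mpr hc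
  have hk : k ≤ (Real.sqrt c)⁻¹ * (q : ℝ)⁻¹ * (a * b) := by
    rw [show (Real.sqrt c)⁻¹ * (q : ℝ)⁻¹ * (a * b) = a * b / (Real.sqrt c * q) by
      rw [div_eq_mul_inv, mul_inv]; ring]
    rw [le_div_iff₀ (mul_pos hsc hqpos)]
    calc k * (Real.sqrt c * q) = Real.sqrt c * q * k := by ring
      _ ≤ a * b := hprod
  calc |(q : ℝ)⁻¹ * a * b - k| ≤ (q : ℝ)⁻¹ * a * b + k := habs
    _ ≤ (q : ℝ)⁻¹ * a * b + (Real.sqrt c)⁻¹ * (q : ℝ)⁻¹ * (a * b) := by linarith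
    _ = (1 + (Real.sqrt c)⁻¹) * (q : ℝ)⁻¹ * (a * b) := by ring
end
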